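/- Let f, g : ℝⁿ → ℝ be quadratic functions (polynomials of degree at most 2) such that g(x̄) > 0 for some x̄ ∈ ℝⁿ. Then g(x) ≥ 0 implies f(x) ≥ 0 for all x ∈ ℝⁿ if and only if there exists ξ ≥ 0 such that f(x) − ξ·g(x) ≥ 0 for all x ∈ ℝⁿ. -/

import Mathlib

open Matrix

open Matrix

noncomputable def slQF {n : ℕ} (A : Matrix (Fin n) (Fin n) ℝ) (a : Fin n → ℝ) (c : ℝ)
    (p : (Fin n → ℝ) × ℝ) : ℝ :=
  p.1 ⬝ᵥ A.mulVec p.1 + p.2 * (a ⬝ᵥ p.1) + c * p.2 ^ 2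

noncomputable def slQB {n : ℕ} (A : Matrix (Fin n) (Fin n) ℝ) (a : Fin n → ℝ) (c : ℝ)
    (p q : (Fin n → ℝ) × ℝ) : ℝ :=
  p.1 ⬝ᵥ A.mulVec q.1 + (p.2 * (a ⬝ᵥ q.1) + q.2 * (a ⬝ᵥ p.1)) / 2 + c * (p.2 * q.2)

lemma slDotSymm {n : ℕ} {A : Matrix (Fin n) (Fin n) ℝ} (hA : A.IsSymm) (x y : Fin n → ℝ) :
    x ⬝ᵥ A.mulVec y = y ⬝ᵥ A.mulVec x := by
  rw [Matrix.dotProduct_mulVec, ← Matrix.mulVec_transpose, hA.eq, dotProduct_comm]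

lemma slQF_expand {n : ℕ} {A : Matrix (Fin n) (Fin n) ℝ} {a : Fin n → ℝ} {c : ℝ}
    (hA : A.IsSymm) (p q : (Fin n → ℝ) × ℝ) (s t : ℝ) :
    slQF A a c (s • p + t • q)
      = s ^ 2 * slQF A a c p + t ^ 2 * slQF A a c q + 2 * (s * t) * slQB A a c p q := by
  obtain ⟨x, u⟩ := p
  obtain ⟨y, v⟩ := q
  simp only [slQF, slQB, Prod.smul_mk, Prod.mk_add_mk, smul_eq_mul,
    Matrix.mulVec_add, Matrix.mulVec_smul, add_dotProduct, dotProduct_add,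
    smul_dotProduct, dotProduct_smul, smul_eq_mul]
  rw [slDotSymm hA y x]
  ring

lemma slQF_smul {n : ℕ} (A : Matrix (Fin n) (Fin n) ℝ) (a : Fin n → ℝ) (c : ℝ)
    (s : ℝ) (p : (Fin n → ℝ) × ℝ) : slQF A a c (s • p) = s ^ 2 * slQF A a c p := by
  obtain ⟨x, u⟩ := p
  simp only [slQF, Prod.smul_mk, smul_eq_mul, Matrix.mulVec_smul, smul_dotProduct,
    dotProduct_smul, smul_eq_mul]
  ring

lemma slQB_smul_left {n : ℕ} (A : Matrix (Fin n) (Fin n) ℝ) (a : Fin n → ℝ) (c : ℝ)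
    (s : ℝ) (p q : (Fin n → ℝ) × ℝ) : slQB A a c (s • p) q = s * slQB A a c p q := by
  obtain ⟨x, u⟩ := p
  simp only [slQB, Prod.smul_mk, smul_eq_mul, Matrix.mulVec_smul, smul_dotProduct,
    dotProduct_smul, smul_eq_mul]
  ring

lemma slQF_zero {n : ℕ} (A : Matrix (Fin n) (Fin n) ℝ) (a : Fin n → ℝ) (c : ℝ) :
    slQF A a c 0 = 0 := by
  simp [slQF]



lemma slCoeffNonneg (α β γ : ℝ) (h : ∀ s : ℝ, 0 ≤ s → 0 ≤ α * s ^ 2 + β * s + γ) :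
    0 ≤ α := by
  by_contra hneg
  push_neg at hneg
  set s : ℝ := max 1 ((|β| + |γ| + 1) / (-α)) with hs
  have hs1 : (1 : ℝ) ≤ s := le_max_left _ _
  have hs2 : (|β| + |γ| + 1) / (-α) ≤ s := le_max_right _ _
  have hα : 0 < -α := by linarith
  have h3 : |β| + |γ| + 1 ≤ (-α) * s := by
    rw [div_le_iff₀ hα] at hs2; linarith [hs2]
  have hb := le_abs_self β
  have hb' := neg_abs_le β
  have hc := le_abs_self γ
  have hc' := neg_abs_le γ
  have := h s (by linarith)
  nlinarith [sq_nonneg s, mul_le_mul_of_nonneg_left h3 (by linarith : (0:ℝ) ≤ s)]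

lemma slEpsLe (x y : ℝ) (h : ∀ ε : ℝ, 0 < ε → x + ε * y < 0) : x ≤ 0 := by
  by_contra hx
  push_neg at hx
  have hε : 0 < x / (2 * (|y| + 1)) := by positivity
  have h2 := h _ hε
  have hy := neg_abs_le y
  have hy2 : x / (2 * (|y| + 1)) * y ≥ -(x / (2 * (|y| + 1)) * (|y| + 1)) := by
    have := mul_le_mul_of_nonneg_left (neg_abs_le y) (le_of_lt hε)
    nlinarith [abs_nonneg y]
  have h3 : x / (2 * (|y| + 1)) * (|y| + 1) = x / 2 := by
    field_simp
  nlinarith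

section
variable {n : ℕ} {A B : Matrix (Fin n) (Fin n) ℝ} {a b : Fin n → ℝ} {c d : ℝ}

lemma slRangeAdd (hA : A.IsSymm) (hB : B.IsSymm) (p q : (Fin n → ℝ) × ℝ) :
    ∃ r : (Fin n → ℝ) × ℝ,
      slQF A a c r = slQF A a c p + slQF A a c q ∧
      slQF B b d r = slQF B b d p + slQF B b d q := by
  set Tf := slQF A a c p + slQF A a c q with hTf
  set Tg := slQF B b d p + slQF B b d q with hTg
  by_cases hT : Tf = 0 ∧ Tg = 0
  · exact ⟨0, by rw [slQF_zero]; exact hT.1.symm, by rw [slQF_zero]; exact hT.2.symm⟩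
  set Sf : ℝ → ℝ := fun θ =>
    Real.cos θ ^ 2 * slQF A a c p + Real.sin θ ^ 2 * slQF A a c q
      + 2 * (Real.cos θ * Real.sin θ) * slQB A a c p q with hSf
  set Sg : ℝ → ℝ := fun θ =>
    Real.cos θ ^ 2 * slQF B b d p + Real.sin θ ^ 2 * slQF B b d q
      + 2 * (Real.cos θ * Real.sin θ) * slQB B b d p q with hSg
  have hSfval : ∀ θ, slQF A a c (Real.cos θ • p + Real.sin θ • q) = Sf θ := fun θ =>
    slQF_expand hA p q _ _
  have hSgval : ∀ θ, slQF B b d (Real.cos θ • p + Real.sin θ • q) = Sg θ := fun θ =>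
    slQF_expand hB p q _ _
  have hSfshift : ∀ θ, Sf (θ + Real.pi / 2) = Tf - Sf θ := by
    intro θ
    simp only [hSf, Real.cos_add_pi_div_two, Real.sin_add_pi_div_two, hTf]
    have h := Real.sin_sq_add_cos_sq θ
    linear_combination (slQF A a c p + slQF A a c q) * h
  have hSgshift : ∀ θ, Sg (θ + Real.pi / 2) = Tg - Sg θ := by
    intro θ
    simp only [hSg, Real.cos_add_pi_div_two, Real.sin_add_pi_div_two, hTg]
    have h := Real.sin_sq_add_cos_sq θ
    linear_combination (slQF B b d p + slQF B b d q) * h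
  set D : ℝ → ℝ := fun θ => Sf θ * Tg - Sg θ * Tf with hD
  have hDshift : ∀ θ, D (θ + Real.pi / 2) = - D θ := by
    intro θ
    simp only [hD, hSfshift, hSgshift]
    ring
  have hDcont : Continuous D := by
    simp only [hD, hSf, hSg]
    fun_prop
  -- find θ₀ with D θ₀ = 0
  have hpi : (0:ℝ) ≤ Real.pi / 2 := by positivity
  have hzero : ∃ θ₀, D θ₀ = 0 := by
    have hshift0 : D (0 + Real.pi / 2) = - D 0 := hDshift 0
    rw [zero_add] at hshift0
    rcases le_total (D 0) 0 with h0 | h0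
    · have h1 : 0 ≤ D (Real.pi / 2) := by rw [hshift0]; linarith
      have hmem : (0:ℝ) ∈ Set.Icc (D 0) (D (Real.pi / 2)) := ⟨h0, h1⟩
      obtain ⟨θ₀, _, hθ₀⟩ := intermediate_value_Icc hpi hDcont.continuousOn hmem
      exact ⟨θ₀, hθ₀⟩
    · have h1 : D (Real.pi / 2) ≤ 0 := by rw [hshift0]; linarith
      have hmem : (0:ℝ) ∈ Set.Icc (D (Real.pi / 2)) (D 0) := ⟨h1, h0⟩
      obtain ⟨θ₀, _, hθ₀⟩ := intermediate_value_Icc' hpi hDcont.continuousOn hmem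
      exact ⟨θ₀, hθ₀⟩
  obtain ⟨θ₀, hθ₀⟩ := hzero
  -- collinearity: ∃ t, Sf θ₀ = t * Tf ∧ Sg θ₀ = t * Tg
  have hcross : Sf θ₀ * Tg = Sg θ₀ * Tf := by
    have : D θ₀ = 0 := hθ₀
    simp only [hD] at this
    linarith
  have hcol : ∃ t : ℝ, Sf θ₀ = t * Tf ∧ Sg θ₀ = t * Tg := by
    rcases (not_and_or.mp hT) with hTf0 | hTg0
    · refine ⟨Sf θ₀ / Tf, by field_simp, ?_⟩
      field_simp
      linarith [hcross]
    · refine ⟨Sg θ₀ / Tg, ?_, by field_simp⟩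
      field_simp
      linarith [hcross]
  obtain ⟨t, htf, htg⟩ := hcol
  -- choose θ* with coefficient ≥ 1/2
  have hbig : ∃ θs ts, (1:ℝ)/2 ≤ ts ∧ Sf θs = ts * Tf ∧ Sg θs = ts * Tg := by
    rcases le_total (1/2 : ℝ) t with h | h
    · exact ⟨θ₀, t, h, htf, htg⟩
    · refine ⟨θ₀ + Real.pi / 2, 1 - t, by linarith, ?_, ?_⟩
      · rw [hSfshift, htf]; ring
      · rw [hSgshift, htg]; ring
  obtain ⟨θs, ts, hts, hfs, hgs⟩ := hbig
  have hts0 : 0 < ts := by linarith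
  have hts' : ts ≠ 0 := ne_of_gt hts0
  refine ⟨Real.sqrt ts⁻¹ • (Real.cos θs • p + Real.sin θs • q), ?_, ?_⟩
  · rw [slQF_smul, Real.sq_sqrt (by positivity : (0:ℝ) ≤ ts⁻¹), hSfval, hfs,
      inv_mul_cancel_left₀ hts']
  · rw [slQF_smul, Real.sq_sqrt (by positivity : (0:ℝ) ≤ ts⁻¹), hSgval, hgs,
      inv_mul_cancel_left₀ hts']

lemma slHomogZeroAux (hA : A.IsSymm) (hB : B.IsSymm)
    (hyp : ∀ x, 0 ≤ slQF B b d (x, 1) → 0 ≤ slQF A a c (x, 1))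
    (xbar : Fin n → ℝ) (hxbar : 0 < slQF B b d (xbar, 1))
    (x : Fin n → ℝ) (hL : 0 ≤ slQB B b d (x, 0) (xbar, 1))
    (hG : 0 ≤ slQF B b d (x, 0)) : 0 ≤ slQF A a c (x, 0) := by
  apply slCoeffNonneg _ (2 * slQB A a c (x, 0) (xbar, 1)) (slQF A a c (xbar, 1))
  intro s hs
  have hpt : s • ((x, (0:ℝ))) + (1:ℝ) • ((xbar, (1:ℝ))) = (s • x + xbar, 1) := by
    simp [Prod.smul_mk, Prod.mk_add_mk]
  have hgeq := slQF_expand (a := b) (c := d) hB (x, 0) (xbar, 1) s 1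
  have hfeq := slQF_expand (a := a) (c := c) hA (x, 0) (xbar, 1) s 1
  rw [hpt] at hgeq hfeq
  have hgpos : 0 ≤ slQF B b d (s • x + xbar, 1) := by
    rw [hgeq]; nlinarith [sq_nonneg s]
  have := hyp _ hgpos
  rw [hfeq] at this
  linarith
lemma slHomogZero (hA : A.IsSymm) (hB : B.IsSymm)
    (hyp : ∀ x, 0 ≤ slQF B b d (x, 1) → 0 ≤ slQF A a c (x, 1))
    (xbar : Fin n → ℝ) (hxbar : 0 < slQF B b d (xbar, 1))
    (x : Fin n → ℝ) (hG : 0 ≤ slQF B b d (x, 0)) : 0 ≤ slQF A a c (x, 0) := by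
  rcases le_or_gt 0 (slQB B b d (x, 0) (xbar, 1)) with hL | hL
  · exact slHomogZeroAux hA hB hyp xbar hxbar x hL hG
  · have hneg : ((-x : Fin n → ℝ), (0:ℝ)) = (-1 : ℝ) • ((x, (0:ℝ))) := by
      simp [Prod.smul_mk]
    have h1 : slQF B b d (-x, 0) = slQF B b d (x, 0) := by
      rw [hneg, slQF_smul]; ring
    have h2 : slQB B b d (-x, 0) (xbar, 1) = - slQB B b d (x, 0) (xbar, 1) := by
      rw [hneg, slQB_smul_left]; ring
    have h3 : slQF A a c (-x, 0) = slQF A a c (x, 0) := by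
      rw [hneg, slQF_smul]; ring
    rw [← h3]
    exact slHomogZeroAux hA hB hyp xbar hxbar (-x) (by rw [h2]; linarith) (by rw [h1]; exact hG)

lemma slHomog (hA : A.IsSymm) (hB : B.IsSymm)
    (hyp : ∀ x, 0 ≤ slQF B b d (x, 1) → 0 ≤ slQF A a c (x, 1))
    (xbar : Fin n → ℝ) (hxbar : 0 < slQF B b d (xbar, 1)) :
    ∀ p : (Fin n → ℝ) × ℝ, 0 ≤ slQF B b d p → 0 ≤ slQF A a c p := by
  rintro ⟨x, t⟩ hG
  rcases eq_or_ne t 0 with rfl | ht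
  · exact slHomogZero hA hB hyp xbar hxbar x hG
  · have hp : ((x, t) : (Fin n → ℝ) × ℝ) = t • (t⁻¹ • x, 1) := by
      simp [Prod.smul_mk, smul_smul, mul_inv_cancel₀ ht]
    rw [hp, slQF_smul] at hG ⊢
    have ht2 : 0 < t ^ 2 := by positivity
    have : 0 ≤ slQF B b d (t⁻¹ • x, 1) := nonneg_of_mul_nonneg_right ?_ ht2
    · exact mul_nonneg (le_of_lt ht2) (hyp _ this)
    · exact hG

lemma slConeSmul (A : Matrix (Fin n) (Fin n) ℝ) (a : Fin n → ℝ) (c : ℝ)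
    (t : ℝ) (ht : 0 ≤ t) (p : (Fin n → ℝ) × ℝ) :
    slQF A a c (Real.sqrt t • p) = t * slQF A a c p := by
  rw [slQF_smul, Real.sq_sqrt ht]

lemma slRangeConvex (hA : A.IsSymm) (hB : B.IsSymm) :
    Convex ℝ (Set.range (fun p : (Fin n → ℝ) × ℝ => ((slQF A a c p, slQF B b d p) : ℝ × ℝ))) := by
  rintro - ⟨p, rfl⟩ - ⟨q, rfl⟩ lam mu hl hm hsum
  obtain ⟨r, hr1, hr2⟩ := slRangeAdd (a := a) (c := c) (b := b) (d := d) hA hB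
    (Real.sqrt lam • p) (Real.sqrt mu • q)
  refine ⟨r, ?_⟩
  simp only [Prod.smul_mk, Prod.mk_add_mk, smul_eq_mul]
  rw [hr1, hr2, slConeSmul A a c lam hl, slConeSmul B b d lam hl,
    slConeSmul A a c mu hm, slConeSmul B b d mu hm]

lemma slSep (hA : A.IsSymm) (hB : B.IsSymm)
    (himp : ∀ p : (Fin n → ℝ) × ℝ, 0 ≤ slQF B b d p → 0 ≤ slQF A a c p)
    (xbar : Fin n → ℝ) (hxbar : 0 < slQF B b d (xbar, 1)) :
    ∃ ξ : ℝ, 0 ≤ ξ ∧ ∀ x : Fin n → ℝ,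
      0 ≤ slQF A a c (x, 1) - ξ * slQF B b d (x, 1) := by
  set M : Set (ℝ × ℝ) :=
    Set.range (fun p : (Fin n → ℝ) × ℝ => ((slQF A a c p, slQF B b d p) : ℝ × ℝ)) with hM
  set s : Set (ℝ × ℝ) := {z : ℝ × ℝ | z.1 < 0 ∧ 0 < z.2} with hs
  have hsconv : Convex ℝ s := by
    have h1 : Convex ℝ {z : ℝ × ℝ | z.1 < 0} :=
      convex_halfSpace_lt (LinearMap.isLinear (LinearMap.fst ℝ ℝ ℝ)) 0
    have h2 : Convex ℝ {z : ℝ × ℝ | 0 < z.2} :=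
      convex_halfSpace_gt (LinearMap.isLinear (LinearMap.snd ℝ ℝ ℝ)) 0
    exact h1.inter h2
  have hsopen : IsOpen s :=
    (isOpen_lt continuous_fst continuous_const).inter
      (isOpen_lt continuous_const continuous_snd)
  have hdisj : Disjoint s M := by
    rw [Set.disjoint_left]
    rintro z ⟨hz1, hz2⟩ ⟨p, rfl⟩
    exact absurd (himp p (le_of_lt hz2)) (not_le.mpr hz1)
  obtain ⟨φ, u, hu1, hu2⟩ := geometric_hahn_banach_open hsconv hsopen (slRangeConvex hA hB) hdisj
  set α : ℝ := φ (1, 0) with hα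
  set β : ℝ := φ (0, 1) with hβ
  have hφ : ∀ z : ℝ × ℝ, φ z = z.1 * α + z.2 * β := by
    intro z
    have : z = z.1 • ((1 : ℝ), (0 : ℝ)) + z.2 • ((0 : ℝ), (1 : ℝ)) := by
      ext <;> simp
    rw [hα, hβ]
    nth_rewrite 1 [this]
    rw [map_add, φ.map_smul, φ.map_smul, smul_eq_mul, smul_eq_mul]
  have h0M : ((0 : ℝ), (0 : ℝ)) ∈ M := ⟨0, by simp [slQF_zero]⟩
  have hu0 : u ≤ 0 := by
    have := hu2 _ h0M
    rwa [hφ, zero_mul, zero_mul, add_zero] at this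
  have hu0' : 0 ≤ u := by
    by_contra hc
    push_neg at hc
    set K : ℝ := β - α with hK
    have key : ∀ ε : ℝ, 0 < ε → ε * K < u := by
      intro ε hε
      have h1 : ((-ε : ℝ), ε) ∈ s := ⟨show -ε < 0 by linarith, hε⟩
      have h2 : -ε * α + ε * β < u := hu1 _ h1 |>.trans_eq' (hφ (-ε, ε))
      rw [hK]
      nlinarith
    set ε₀ : ℝ := -u / (|K| + 1) with hε₀def
    have habs : 0 ≤ |K| := abs_nonneg K
    have hε₀ : 0 < ε₀ := by
      rw [hε₀def]
      exact div_pos (by linarith) (by positivity)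
    have h1 : ε₀ * |K| + ε₀ = -u := by
      rw [hε₀def]
      field_simp
      ring
    have hmul : ε₀ * -|K| ≤ ε₀ * K :=
      mul_le_mul_of_nonneg_left (neg_abs_le K) (le_of_lt hε₀)
    have h2 := key ε₀ hε₀
    nlinarith
  have hueq : u = 0 := le_antisymm hu0 hu0'
  have hMpos : ∀ p : (Fin n → ℝ) × ℝ, 0 ≤ α * slQF A a c p + β * slQF B b d p := by
    intro p
    have := hu2 _ ⟨p, rfl⟩
    rw [hφ, hueq] at this
    simpa [mul_comm] using this
  have hαpos : 0 ≤ α := by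
    have := slEpsLe (-α) β (by
      intro ε hε
      have h1 : ((-1 : ℝ), ε) ∈ s := ⟨show (-1 : ℝ) < 0 by norm_num, hε⟩
      have h2 : (-1 : ℝ) * α + ε * β < u := hu1 _ h1 |>.trans_eq' (hφ (-1, ε))
      rw [hueq] at h2
      linarith)
    linarith
  have hβneg : β ≤ 0 := by
    have := slEpsLe β (-α) (by
      intro ε hε
      have h1 : ((-ε : ℝ), 1) ∈ s := ⟨show -ε < 0 by linarith, show (0:ℝ) < 1 by norm_num⟩
      have h2 : -ε * α + 1 * β < u := hu1 _ h1 |>.trans_eq' (hφ (-ε, 1))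
      rw [hueq] at h2
      linarith)
    linarith
  have hαne : α ≠ 0 := by
    intro h0
    have hb0 : 0 ≤ β := by
      have := hMpos (xbar, 1)
      rw [h0, zero_mul, zero_add] at this
      nlinarith
    have hβ0 : β = 0 := le_antisymm hβneg hb0
    have h1 : ((-1 : ℝ), 1) ∈ s := ⟨show (-1:ℝ) < 0 by norm_num, show (0:ℝ) < 1 by norm_num⟩
    have h2 : (-1 : ℝ) * α + 1 * β < u := hu1 _ h1 |>.trans_eq' (hφ (-1, 1))
    rw [hueq, h0, hβ0] at h2
    norm_num at h2
  have hαpos' : 0 < α := lt_of_le_of_ne hαpos (Ne.symm hαne)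
  refine ⟨-β / α, div_nonneg (by linarith) (le_of_lt hαpos'), ?_⟩
  intro x
  have := hMpos (x, 1)
  have hd : slQF A a c (x, 1) - (-β / α) * slQF B b d (x, 1)
      = (α * slQF A a c (x, 1) + β * slQF B b d (x, 1)) / α := by
    field_simp
    ring
  rw [hd]
  exact div_nonneg this (le_of_lt hαpos')

end

theorem s_lemma (n : ℕ) (f g : (Fin n → ℝ) → ℝ)
    (A B : Matrix (Fin n) (Fin n) ℝ) (a b : Fin n → ℝ) (c d : ℝ)
    (hA : A.IsSymm) (hB : B.IsSymm)
    (hf : ∀ x, f x = dotProduct x (A.mulVec x) + dotProduct a x + c)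
    (hg : ∀ x, g x = dotProduct x (B.mulVec x) + dotProduct b x + d)
    (hslater : ∃ xbar : Fin n → ℝ, g xbar > 0) :
    (∀ x : Fin n → ℝ, g x ≥ 0 → f x ≥ 0) ↔
      ∃ ξ : ℝ, ξ ≥ 0 ∧ ∀ x : Fin n → ℝ, f x - ξ * g x ≥ 0 := by
  obtain ⟨xbar, hxbar⟩ := hslater
  have hf1 : ∀ x, slQF A a c (x, 1) = f x := by
    intro x
    rw [hf x]
    simp only [slQF]
    ring
  have hg1 : ∀ x, slQF B b d (x, 1) = g x := by
    intro x
    rw [hg x]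
    simp only [slQF]
    ring
  constructor
  · intro hyp
    have hyp' : ∀ x, 0 ≤ slQF B b d (x, 1) → 0 ≤ slQF A a c (x, 1) := by
      intro x h
      rw [hg1] at h
      rw [hf1]
      exact hyp x h
    have hxbar' : 0 < slQF B b d (xbar, 1) := by rw [hg1]; exact hxbar
    have himp := slHomog hA hB hyp' xbar hxbar'
    obtain ⟨ξ, hξ, hall⟩ := slSep hA hB himp xbar hxbar'
    refine ⟨ξ, hξ, fun x => ?_⟩
    have := hall x
    rw [hf1, hg1] at this
    linarith
  · rintro ⟨ξ, hξ, hall⟩ x hgx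
    have h1 := hall x
    have h2 : 0 ≤ ξ * g x := mul_nonneg hξ hgx
    linarith
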